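/- There exist a, b ∈ ℂ with |a|² + |b|² = 1, giving the qubit unitary U = [[a, b], [−conj(b), conj(a)]], and a qubit density matrix ρ, such that for every θ ∈ ℝ: C_r(ρ) − C_r(U ρ U†) > 1 − H(|(U ψ_θ)₀|²). That is, the generalized de-cohering power of U in the relative entropy of coherence strictly exceeds its de-cohering power over maximally coherent states; the two de-cohering powers are not equal for qubit unitaries. -/

import Mathlib

open Matrix BigOperators ComplexOrder

/-- The l1-coherence of a matrix: the sum of the absolute values of its
off-diagonal entries. -/
noncomputable def Cl1 {n : ℕ} (A : Matrix (Fin n) (Fin n) ℂ) : ℝ :=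
  ∑ i, ∑ j, if i ≠ j then ‖A i j‖ else 0

/-- A density matrix: positive semidefinite with trace 1. -/
def IsDensity {n : ℕ} (ρ : Matrix (Fin n) (Fin n) ℂ) : Prop :=
  ρ.PosSemidef ∧ ρ.trace = 1

/-- A quantum operation (CPTP map) given by a finite family of Kraus operators. -/
def IsQuantumOp {n : ℕ} (Φ : Matrix (Fin n) (Fin n) ℂ → Matrix (Fin n) (Fin n) ℂ) : Prop :=
  ∃ (m : ℕ) (K : Fin m → Matrix (Fin n) (Fin n) ℂ),
    (∑ i, (K i)ᴴ * K i) = 1 ∧ ∀ ρ, Φ ρ = ∑ i, K i * ρ * (K i)ᴴ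

/-- The dephasing map `Δ`, keeping only the diagonal part of a matrix. -/
def Deph {n : ℕ} (A : Matrix (Fin n) (Fin n) ℂ) : Matrix (Fin n) (Fin n) ℂ :=
  Matrix.of fun i j => if i = j then A i j else 0

/-- The maximally coherent qubit state vector `(1/√2)(1, e^{iθ})`. -/
noncomputable def psi (θ : ℝ) : Fin 2 → ℂ :=
  ![1 / (Real.sqrt 2 : ℂ), Complex.exp (θ * Complex.I) / (Real.sqrt 2 : ℂ)]

/-- The outer product `w w†` of a vector with itself. -/
def outer {n : ℕ} (w : Fin n → ℂ) : Matrix (Fin n) (Fin n) ℂ :=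
  Matrix.vecMulVec w (star w)

/-- The qubit unitary `[[a, b], [-conj b, conj a]]`. -/
def Uab (a b : ℂ) : Matrix (Fin 2) (Fin 2) ℂ :=
  !![a, b; -(starRingEnd ℂ) b, (starRingEnd ℂ) a]

/-- The binary entropy (base 2), with the convention `0 · log 0 = 0`. -/
noncomputable def H (x : ℝ) : ℝ :=
  -(x * Real.logb 2 x) - (1 - x) * Real.logb 2 (1 - x)

/-- The relative entropy of coherence of a qubit density matrix:
`C_r(ρ) = H(ρ₀₀) − S(ρ)` where `S(ρ) = H((1+r)/2)` with
`r = sqrt((ρ₀₀ − ρ₁₁)² + 4|ρ₀₁|²)`. -/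
noncomputable def Cr2 (ρ : Matrix (Fin 2) (Fin 2) ℂ) : ℝ :=
  H ((ρ 0 0).re) -
    H ((1 + Real.sqrt (((ρ 0 0).re - (ρ 1 1).re) ^ 2 + 4 * ‖ρ 0 1‖ ^ 2)) / 2)

/-! ### Auxiliary lemmas -/

/-- Shorthand for `√3`. -/
noncomputable def sq3 : ℝ := Real.sqrt 3

lemma sq3_sq : sq3 ^ 2 = 3 := Real.sq_sqrt (by norm_num)

lemma sq3_nonneg : 0 ≤ sq3 := Real.sqrt_nonneg 3

lemma sq3_csq : ((sq3:ℝ):ℂ) ^ 2 = 3 := by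
  calc ((sq3:ℝ):ℂ) ^ 2 = ((sq3 ^ 2 : ℝ) : ℂ) := by push_cast; ring
  _ = 3 := by rw [sq3_sq]; norm_num

/-- The chosen density matrix. -/
noncomputable def rr : Matrix (Fin 2) (Fin 2) ℂ :=
  !![(1/4 : ℂ), (sq3/4 : ℝ); ((sq3/4 : ℝ) : ℂ), (3/4 : ℂ)]

lemma rr_psd : rr.PosSemidef := by
  have h : rr = (!![((1/2 : ℝ) : ℂ), ((sq3/2 : ℝ) : ℂ)])ᴴ *
      !![((1/2 : ℝ) : ℂ), ((sq3/2 : ℝ) : ℂ)] := by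
    ext i j
    fin_cases i <;> fin_cases j <;>
      simp [rr, Matrix.mul_apply, Fin.sum_univ_one, Complex.conj_ofReal] <;>
      push_cast <;>
      first
        | linear_combination (1/4 : ℂ) * sq3_csq
        | linear_combination (-1/4 : ℂ) * sq3_csq
        | ring
        | norm_num
  rw [h]; exact Matrix.posSemidef_conjTranspose_mul_self _

lemma rr_tr : rr.trace = 1 := by
  simp [rr, Matrix.trace, Fin.sum_univ_two]
  norm_num

lemma Urho : Uab ((1/2:ℝ):ℂ) (((sq3/2:ℝ)):ℂ) * rr * (Uab ((1/2:ℝ):ℂ) (((sq3/2:ℝ)):ℂ))ᴴ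
    = !![(1:ℂ), 0; 0, 0] := by
  ext i j
  fin_cases i <;> fin_cases j <;>
    simp [Uab, rr, Matrix.mul_apply, Fin.sum_univ_two, Complex.conj_ofReal, map_ofNat,
      Complex.conj_ofNat] <;>
    push_cast <;>
    first
      | linear_combination (5/16 : ℂ) * sq3_csq
      | linear_combination (-5/16 : ℂ) * sq3_csq
      | linear_combination (((sq3:ℝ):ℂ)/16) * sq3_csq
      | linear_combination (-((sq3:ℝ):ℂ)/16) * sq3_csq
      | linear_combination (1/16 : ℂ) * sq3_csq
      | linear_combination (-1/16 : ℂ) * sq3_csq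
      | ring
      | norm_num

lemma xtheta (θ : ℝ) : ‖(Uab ((1/2:ℝ):ℂ) (((sq3/2:ℝ)):ℂ)).mulVec (psi θ) 0‖ ^ 2
    = 1/2 + (sq3/4) * Real.cos θ := by
  have hne : ((Real.sqrt 2 : ℝ):ℂ) ≠ 0 := by
    norm_cast
    exact ne_of_gt (Real.sqrt_pos.2 (by norm_num))
  have h0 : (Uab ((1/2:ℝ):ℂ) (((sq3/2:ℝ)):ℂ)).mulVec (psi θ) 0
      = (1 + ((sq3:ℝ):ℂ) * Complex.exp (θ * Complex.I)) / (2 * (Real.sqrt 2 : ℝ)) := by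
    simp [Uab, psi, Matrix.mulVec, dotProduct, Fin.sum_univ_two]
    field_simp
    try ring
  rw [h0, norm_div, div_pow, Complex.sq_norm]
  have habs : ‖((2 * (Real.sqrt 2 : ℝ) : ℝ) : ℂ)‖ = 2 * Real.sqrt 2 := by
    rw [Complex.norm_real, Real.norm_eq_abs, abs_of_nonneg (by positivity)]
  have h2 : (2 * Real.sqrt 2) ^ 2 = 8 := by
    have := Real.sq_sqrt (by norm_num : (0:ℝ) ≤ 2)
    nlinarith
  have hcast : ((2 : ℂ) * ((Real.sqrt 2 : ℝ):ℂ)) = (((2 * Real.sqrt 2 : ℝ)):ℂ) := by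
    push_cast; ring
  rw [hcast, habs, h2]
  have hre : (1 + ((sq3:ℝ):ℂ) * Complex.exp (θ * Complex.I)).re = 1 + sq3 * Real.cos θ := by
    simp [Complex.add_re, Complex.mul_re, Complex.exp_ofReal_mul_I_re, Complex.exp_ofReal_mul_I_im]
  have him : (1 + ((sq3:ℝ):ℂ) * Complex.exp (θ * Complex.I)).im = sq3 * Real.sin θ := by
    simp [Complex.add_im, Complex.mul_im, Complex.exp_ofReal_mul_I_re, Complex.exp_ofReal_mul_I_im]
  rw [Complex.normSq_apply, hre, him]
  have h3 : sq3 ^ 2 = 3 := sq3_sq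
  have hpyt : Real.sin θ ^ 2 + Real.cos θ ^ 2 = 1 := Real.sin_sq_add_cos_sq θ
  field_simp
  nlinarith [h3, hpyt]

lemma H_eq (x : ℝ) : H x = Real.binEntropy x / Real.log 2 := by
  simp only [H, Real.binEntropy, Real.logb, Real.log_inv]
  ring

lemma H_one : H 1 = 0 := by simp [H]

lemma binEntropy_mono {q x : ℝ} (hq : 1/2 ≤ q) (hq1 : q ≤ 1) (h1 : 1 - q ≤ x) (h2 : x ≤ q) :
    Real.binEntropy q ≤ Real.binEntropy x := by
  rcases le_or_gt x (1/2) with hx | hx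
  · rw [← Real.binEntropy_one_sub x]
    exact Real.binEntropy_strictAntiOn.antitoneOn
      (Set.mem_Icc.2 ⟨by norm_num; linarith, by linarith⟩)
      (Set.mem_Icc.2 ⟨by norm_num; linarith, by linarith⟩)
      (by linarith)
  · exact Real.binEntropy_strictAntiOn.antitoneOn
      (Set.mem_Icc.2 ⟨by norm_num; linarith, by linarith⟩)
      (Set.mem_Icc.2 ⟨by norm_num; linarith, by linarith⟩)
      h2

lemma key : Real.log 2 < Real.binEntropy ((2 + sq3)/4) + Real.binEntropy (1/4) := by
  have hs : sq3 ^ 2 = 3 := sq3_sq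
  set s := sq3 with hsdef
  have hs0 : 0 ≤ s := sq3_nonneg
  have hs17 : 1.7 < s := by nlinarith
  have hs18 : s < 1.8 := by nlinarith
  have hq : (0:ℝ) < (2 + s)/4 := by linarith
  have hq' : (0:ℝ) < (2 - s)/4 := by linarith
  have hinv : ((2 - s)/4) = (((2+s) : ℝ))⁻¹ / 4 := by
    rw [eq_div_iff (by norm_num : (4:ℝ) ≠ 0)] at *
    field_simp
    nlinarith
  have hlogq : Real.log ((2+s)/4) = Real.log (2+s) - 2 * Real.log 2 := by
    rw [Real.log_div (by linarith) (by norm_num)]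
    rw [show (4:ℝ) = 2^2 by norm_num, Real.log_pow]
    push_cast; ring
  have hlog1q : Real.log ((2-s)/4) = - Real.log (2+s) - 2 * Real.log 2 := by
    rw [hinv, Real.log_div (by positivity) (by norm_num), Real.log_inv]
    rw [show (4:ℝ) = 2^2 by norm_num, Real.log_pow]
    push_cast; ring
  have hbq : Real.binEntropy ((2+s)/4) = 2 * Real.log 2 - (s/2) * Real.log (2+s) := by
    rw [Real.binEntropy]
    rw [Real.log_inv, Real.log_inv]
    have h1 : 1 - (2+s)/4 = (2-s)/4 := by ring
    rw [h1, hlogq, hlog1q]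
    ring
  have hb4 : Real.binEntropy (1/4 : ℝ) = 2 * Real.log 2 - (3/4) * Real.log 3 := by
    rw [Real.binEntropy]
    rw [Real.log_inv, Real.log_inv]
    have h1 : (1:ℝ) - 1/4 = 3/4 := by norm_num
    have h4 : Real.log 4 = 2 * Real.log 2 := by
      rw [show (4:ℝ) = 2^2 by norm_num, Real.log_pow]; push_cast; ring
    rw [h1, show (1/4 : ℝ) = 4⁻¹ by norm_num, Real.log_inv,
      Real.log_div (by norm_num) (by norm_num), h4]
    ring
  rw [hbq, hb4]
  have hLA : Real.log (2+s) ≤ 2 * Real.log 2 + ((2+s)/4 - 1) := by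
    have := Real.log_le_sub_one_of_pos hq
    rw [hlogq] at this; linarith
  have hL3 : Real.log 3 ≤ (3/2) * Real.log 2 + 1/16 := by
    have h9 : Real.log 9 = 2 * Real.log 3 := by
      rw [show (9:ℝ) = 3^2 by norm_num, Real.log_pow]; push_cast; ring
    have h98 : Real.log (9/8) ≤ 9/8 - 1 := Real.log_le_sub_one_of_pos (by norm_num)
    have h9' : Real.log 9 = Real.log 8 + Real.log (9/8) := by
      rw [← Real.log_mul (by norm_num) (by norm_num)]; norm_num
    have h8 : Real.log 8 = 3 * Real.log 2 := by
      rw [show (8:ℝ) = 2^3 by norm_num, Real.log_pow]; push_cast; ring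
    nlinarith [h9, h98, h9', h8]
  have hL2a : 0.6931 < Real.log 2 := by
    have := Real.log_two_gt_d9; linarith
  have hL2b : Real.log 2 < 0.6932 := by
    have := Real.log_two_lt_d9; linarith
  nlinarith [mul_le_mul_of_nonneg_left hLA (by linarith : (0:ℝ) ≤ s/2),
    mul_pos (by linarith : (0:ℝ) < 15/8 - s) (by linarith : (0:ℝ) < Real.log 2)]

lemma Cr2_rr : Cr2 rr = H (1/4) := by
  have e00 : (rr 0 0).re = 1/4 := by norm_num [rr]
  have e11 : (rr 1 1).re = 3/4 := by norm_num [rr]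
  have e01 : ‖rr 0 1‖ = sq3/4 := by
    have : rr 0 1 = ((sq3/4 : ℝ) : ℂ) := by norm_num [rr]
    rw [this, Complex.norm_real, Real.norm_eq_abs, abs_of_nonneg (by have := sq3_nonneg; positivity)]
  rw [Cr2, e00, e11, e01]
  have harg : ((1:ℝ)/4 - 3/4) ^ 2 + 4 * (sq3/4) ^ 2 = 1 := by
    nlinarith [sq3_sq]
  rw [harg, Real.sqrt_one]
  norm_num [H_one]

lemma Cr2_out : Cr2 (!![(1:ℂ), 0; 0, 0]) = 0 := by
  have h : ((1:ℝ) - 0) ^ 2 + 4 * ‖(0:ℂ)‖ ^ 2 = 1 := by simp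
  rw [Cr2]
  norm_num [h, Real.sqrt_one, H_one]

theorem generalized_decohering_power_gt_decohering_power_relent :
    ∃ a b : ℂ, ‖a‖ ^ 2 + ‖b‖ ^ 2 = 1 ∧
      ∃ ρ : Matrix (Fin 2) (Fin 2) ℂ, IsDensity ρ ∧
        ∀ θ : ℝ,
          1 - H (‖(Uab a b).mulVec (psi θ) 0‖ ^ 2) <
            Cr2 ρ - Cr2 (Uab a b * ρ * (Uab a b)ᴴ) := by
  refine ⟨((1/2:ℝ):ℂ), ((sq3/2:ℝ):ℂ), ?_, rr, ⟨rr_psd, rr_tr⟩, ?_⟩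
  · rw [Complex.norm_real, Complex.norm_real, Real.norm_eq_abs, Real.norm_eq_abs, abs_of_nonneg (by norm_num),
      abs_of_nonneg (by have := sq3_nonneg; positivity)]
    nlinarith [sq3_sq]
  · intro θ
    rw [Urho, Cr2_rr, Cr2_out, xtheta, sub_zero]
    set x : ℝ := 1/2 + (sq3/4) * Real.cos θ with hx
    have hs : sq3 ^ 2 = 3 := sq3_sq
    have hs0 : 0 ≤ sq3 := sq3_nonneg
    have hs2 : sq3 ≤ 2 := by nlinarith
    have hc1 : Real.cos θ ≤ 1 := Real.cos_le_one θ
    have hc2 : -1 ≤ Real.cos θ := Real.neg_one_le_cos θ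
    have hxu : x ≤ (2 + sq3)/4 := by
      rw [hx]; nlinarith
    have hxl : 1 - (2 + sq3)/4 ≤ x := by
      rw [hx]; nlinarith
    have hmono : Real.binEntropy ((2 + sq3)/4) ≤ Real.binEntropy x :=
      binEntropy_mono (by linarith) (by linarith) hxl hxu
    have hkey := key
    have hL2 : (0:ℝ) < Real.log 2 := Real.log_pos (by norm_num)
    rw [H_eq, H_eq]
    have h1 : 1 < (Real.binEntropy x + Real.binEntropy (1/4)) / Real.log 2 := by
      rw [lt_div_iff₀ hL2]; linarith
    rw [add_div] at h1
    linarith
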